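/- Let N be a compound Poisson random vector on ℤ≥0^J: N = ∑_{m=1}^{M} Y_m where M ~ Poisson(Λ) and Y_m are i.i.d. with PMF f, independent of M. Then for any n ∈ ℤ≥0^J with n ≠ 0 and any coordinate v with n_v ≥ 1: P(N = n) = Λ · ∑_{i ≤ n} (i_v / n_v) · f(i) · P(N = n − i). -/

import Mathlib

/-- The `m`-fold convolution of a PMF `f` on `ℤ≥0^J`. -/
def conv {J : ℕ} (f : (Fin J → ℕ) → ℝ) : ℕ → (Fin J → ℕ) → ℝ
  | 0 => fun n => if n = 0 then 1 else 0
  | m + 1 => fun n => ∑ i ∈ Finset.Iic n, f i * conv f m (n - i)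

/-- The PMF of a compound Poisson random vector `N = ∑_{m=1}^M Y_m` on `ℤ≥0^J`,
where `M ~ Poisson(Λ)` and the `Y_m` are i.i.d. with PMF `f`, independent of `M`. -/
noncomputable def compoundPoissonPMF {J : ℕ} (Λ : ℝ) (f : (Fin J → ℕ) → ℝ) (n : Fin J → ℕ) : ℝ :=
  ∑' m : ℕ, Real.exp (-Λ) * Λ ^ m / m.factorial * conv f m n

lemma conv_succ {J : ℕ} (f : (Fin J → ℕ) → ℝ) (m : ℕ) (n : Fin J → ℕ) :
    conv f (m + 1) n = ∑ i ∈ Finset.Iic n, f i * conv f m (n - i) := rfl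

lemma conv_nonneg {J : ℕ} (f : (Fin J → ℕ) → ℝ) (hf : ∀ i, 0 ≤ f i) :
    ∀ m n, 0 ≤ conv f m n := by
  intro m
  induction m with
  | zero => intro n; simp only [conv]; split <;> norm_num
  | succ m ih =>
    intro n
    rw [conv_succ]
    exact Finset.sum_nonneg fun i _ => mul_nonneg (hf i) (ih _)

lemma conv_le_one {J : ℕ} (f : (Fin J → ℕ) → ℝ) (hf : ∀ i, 0 ≤ f i)
    (hsum : Summable f) (hle : ∑' i, f i = 1) :
    ∀ m n, conv f m n ≤ 1 := by
  intro m
  induction m with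
  | zero => intro n; simp only [conv]; split <;> norm_num
  | succ m ih =>
    intro n
    rw [conv_succ]
    calc ∑ i ∈ Finset.Iic n, f i * conv f m (n - i)
        ≤ ∑ i ∈ Finset.Iic n, f i := Finset.sum_le_sum fun i _ =>
          mul_le_of_le_one_right (hf i) (ih _)
      _ ≤ ∑' i, f i := Summable.sum_le_tsum _ (fun i _ => hf i) hsum
      _ = 1 := hle

lemma conv_key {J : ℕ} (f : (Fin J → ℕ) → ℝ) (v : Fin J) :
    ∀ (m : ℕ) (n : Fin J → ℕ), (n v : ℝ) * conv f (m + 1) n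
      = ((m : ℝ) + 1) * ∑ i ∈ Finset.Iic n, (i v : ℝ) * f i * conv f m (n - i) := by
  intro m
  induction m with
  | zero =>
    intro n
    rw [conv_succ]
    have h1 : ∑ i ∈ Finset.Iic n, f i * conv f 0 (n - i) = f n := by
      rw [Finset.sum_eq_single_of_mem n (Finset.mem_Iic.mpr le_rfl)]
      · simp [conv]
      · intro i hi hne
        have h : n - i ≠ 0 := fun h =>
          hne (le_antisymm (Finset.mem_Iic.mp hi) (tsub_eq_zero_iff_le.mp h))
        simp [conv, h]
    have h2 : ∑ i ∈ Finset.Iic n, (i v : ℝ) * f i * conv f 0 (n - i) = (n v : ℝ) * f n := by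
      rw [Finset.sum_eq_single_of_mem n (Finset.mem_Iic.mpr le_rfl)]
      · simp [conv]
      · intro i hi hne
        have h : n - i ≠ 0 := fun h =>
          hne (le_antisymm (Finset.mem_Iic.mp hi) (tsub_eq_zero_iff_le.mp h))
        simp [conv, h]
    rw [h1, h2]; ring
  | succ m ih =>
    intro n
    rw [conv_succ]
    have split : (n v : ℝ) * ∑ i ∈ Finset.Iic n, f i * conv f (m + 1) (n - i)
        = (∑ i ∈ Finset.Iic n, (i v : ℝ) * f i * conv f (m + 1) (n - i))
          + ∑ i ∈ Finset.Iic n, f i * ((((n - i) v : ℕ) : ℝ) * conv f (m + 1) (n - i)) := by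
      rw [Finset.mul_sum, ← Finset.sum_add_distrib]
      refine Finset.sum_congr rfl fun i hi => ?_
      have hle : i ≤ n := Finset.mem_Iic.mp hi
      have hnv : ((n v : ℕ) : ℝ) = (i v : ℝ) + (((n - i) v : ℕ) : ℝ) := by
        have : (n - i) v = n v - i v := rfl
        rw [this]
        have := hle v
        push_cast [Nat.cast_sub this]
        ring
      rw [hnv]; ring
    have swap : ∑ i ∈ Finset.Iic n, f i *
          (∑ j ∈ Finset.Iic (n - i), (j v : ℝ) * f j * conv f m (n - i - j))
        = ∑ i ∈ Finset.Iic n, (i v : ℝ) * f i * conv f (m + 1) (n - i) := by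
      have hmem : ∀ (x y : Fin J → ℕ),
          x ∈ Finset.Iic n ∧ y ∈ Finset.Iic (n - x) ↔
          x ∈ Finset.Iic (n - y) ∧ y ∈ Finset.Iic n := by
        intro x y
        simp only [Finset.mem_Iic]
        constructor
        · rintro ⟨h1, h2⟩
          have h3 : x + y ≤ n := (le_tsub_iff_left h1).mp h2
          have h4 : y ≤ n := le_trans le_add_self h3
          exact ⟨(le_tsub_iff_left h4).mpr (by rwa [add_comm] at h3), h4⟩
        · rintro ⟨h2, h1⟩
          have h3 : y + x ≤ n := (le_tsub_iff_left h1).mp h2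
          have h4 : x ≤ n := le_trans le_add_self h3
          exact ⟨h4, (le_tsub_iff_left h4).mpr (by rwa [add_comm] at h3)⟩
      calc ∑ i ∈ Finset.Iic n, f i *
            (∑ j ∈ Finset.Iic (n - i), (j v : ℝ) * f j * conv f m (n - i - j))
          = ∑ i ∈ Finset.Iic n, ∑ j ∈ Finset.Iic (n - i),
              f i * ((j v : ℝ) * f j * conv f m (n - i - j)) := by
            exact Finset.sum_congr rfl fun i _ => Finset.mul_sum _ _ _
        _ = ∑ j ∈ Finset.Iic n, ∑ i ∈ Finset.Iic (n - j),
              f i * ((j v : ℝ) * f j * conv f m (n - i - j)) := Finset.sum_comm' hmem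
        _ = ∑ j ∈ Finset.Iic n, (j v : ℝ) * f j * conv f (m + 1) (n - j) := by
            refine Finset.sum_congr rfl fun j _ => ?_
            rw [conv_succ, Finset.mul_sum]
            refine Finset.sum_congr rfl fun i _ => ?_
            have : n - i - j = n - j - i := by
              rw [tsub_tsub, tsub_tsub, add_comm]
            rw [this]; ring
    rw [split]
    have hr : ∑ i ∈ Finset.Iic n, f i * ((((n - i) v : ℕ) : ℝ) * conv f (m + 1) (n - i))
        = ((m : ℝ) + 1) * ∑ i ∈ Finset.Iic n, (i v : ℝ) * f i * conv f (m + 1) (n - i) := by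
      rw [← swap, Finset.mul_sum]
      refine Finset.sum_congr rfl fun i _ => ?_
      rw [ih (n - i)]; ring
    rw [hr]
    push_cast
    ring

/-- Multivariate Panjer recursion for compound Poisson distributions: if `N` is
compound Poisson with rate `Λ` and jump PMF `f`, then for `n ≠ 0` and a coordinate
`v` with `n v ≥ 1`, `P(N = n) = Λ ∑_{i ≤ n} (i_v/n_v) f(i) P(N = n − i)`. -/
theorem compound_poisson_panjer {J : ℕ} (Λ : ℝ) (hΛ : 0 < Λ)
    (f : (Fin J → ℕ) → ℝ) (hfnonneg : ∀ i, 0 ≤ f i) (hfsum : ∑' i, f i = 1)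
    (n : Fin J → ℕ) (hn : n ≠ 0) (v : Fin J) (hv : 1 ≤ n v) :
    compoundPoissonPMF Λ f n =
      Λ * ∑ i ∈ Finset.Iic n,
        ((i v : ℝ) / (n v : ℝ)) * f i * compoundPoissonPMF Λ f (n - i) := by
  have hΛ0 : 0 ≤ Λ := hΛ.le
  have hsf : Summable f := by
    by_contra h
    rw [tsum_eq_zero_of_not_summable h] at hfsum
    norm_num at hfsum
  set b : ℕ → ℝ := fun m => Real.exp (-Λ) * Λ ^ m / m.factorial with hb_def
  have hb : Summable b := by
    have := (Real.summable_pow_div_factorial Λ).mul_left (Real.exp (-Λ))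
    simpa [hb_def, mul_div_assoc] using this
  have hbnn : ∀ m : ℕ, 0 ≤ b m := fun m =>
    div_nonneg (mul_nonneg (Real.exp_nonneg _) (pow_nonneg hΛ0 m)) (Nat.cast_nonneg _)
  have hsa : ∀ k, Summable (fun m : ℕ => b m * conv f m k) := fun k =>
    Summable.of_nonneg_of_le
      (fun m => mul_nonneg (hbnn m) (conv_nonneg f hfnonneg m k))
      (fun m => mul_le_of_le_one_right (hbnn m) (conv_le_one f hfnonneg hsf hfsum m k)) hb
  have hnv : (0 : ℝ) < (n v : ℝ) := by
    have : 0 < n v := hv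
    exact_mod_cast this
  have hpmf : ∀ k, compoundPoissonPMF Λ f k = ∑' m : ℕ, b m * conv f m k := fun k => rfl
  have key : (n v : ℝ) * compoundPoissonPMF Λ f n
      = Λ * ∑ i ∈ Finset.Iic n, (i v : ℝ) * f i * compoundPoissonPMF Λ f (n - i) := by
    have hsa' : Summable (fun m : ℕ => (n v : ℝ) * (b m * conv f m n)) := (hsa n).mul_left _
    calc (n v : ℝ) * compoundPoissonPMF Λ f n
        = ∑' m : ℕ, (n v : ℝ) * (b m * conv f m n) := by
          rw [hpmf, tsum_mul_left]
      _ = ∑' m : ℕ, (n v : ℝ) * (b (m + 1) * conv f (m + 1) n) := by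
          rw [Summable.tsum_eq_zero_add hsa']
          have h0 : conv f 0 n = 0 := by simp [conv, hn]
          rw [h0]; simp
      _ = ∑' m : ℕ, Λ * ∑ i ∈ Finset.Iic n, (i v : ℝ) * f i * (b m * conv f m (n - i)) := by
          refine tsum_congr fun m => ?_
          have hb' : b (m + 1) * ((m : ℝ) + 1) = Λ * b m := by
            simp only [hb_def, Nat.factorial_succ]
            push_cast
            have h1 : ((m.factorial : ℝ)) ≠ 0 := by
              exact_mod_cast m.factorial_pos.ne'
            field_simp
            ring
          calc (n v : ℝ) * (b (m + 1) * conv f (m + 1) n)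
              = b (m + 1) * ((n v : ℝ) * conv f (m + 1) n) := by ring
            _ = b (m + 1) * (((m : ℝ) + 1) *
                  ∑ i ∈ Finset.Iic n, (i v : ℝ) * f i * conv f m (n - i)) := by
                rw [conv_key]
            _ = (b (m + 1) * ((m : ℝ) + 1)) *
                  ∑ i ∈ Finset.Iic n, (i v : ℝ) * f i * conv f m (n - i) := by ring
            _ = Λ * b m * ∑ i ∈ Finset.Iic n, (i v : ℝ) * f i * conv f m (n - i) := by
                rw [hb']
            _ = Λ * ∑ i ∈ Finset.Iic n, (i v : ℝ) * f i * (b m * conv f m (n - i)) := by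
                rw [Finset.mul_sum, Finset.mul_sum]
                exact Finset.sum_congr rfl fun i _ => by ring
      _ = Λ * ∑' m : ℕ, ∑ i ∈ Finset.Iic n, (i v : ℝ) * f i * (b m * conv f m (n - i)) := by
          rw [tsum_mul_left]
      _ = Λ * ∑ i ∈ Finset.Iic n, ∑' m : ℕ, (i v : ℝ) * f i * (b m * conv f m (n - i)) := by
          rw [Summable.tsum_finsetSum fun i _ => (hsa (n - i)).mul_left _]
      _ = Λ * ∑ i ∈ Finset.Iic n, (i v : ℝ) * f i * compoundPoissonPMF Λ f (n - i) := by
          refine congrArg _ (Finset.sum_congr rfl fun i _ => ?_)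
          rw [tsum_mul_left, hpmf]
  have h2 : compoundPoissonPMF Λ f n
      = (n v : ℝ)⁻¹ * ((n v : ℝ) * compoundPoissonPMF Λ f n) := by
    field_simp
  rw [h2, key, Finset.mul_sum, Finset.mul_sum, Finset.mul_sum]
  refine Finset.sum_congr rfl fun i _ => ?_
  field_simp
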